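/- (Interior touching principle) Let B ⊆ ℝⁿ be open and connected and let L(w) = Σ_{i,j} a_{ij}(x) w_{ij} + Σ_i b_i(x) w_i + c(x) w, where a_{ij} = a_{ji}, b_i, c are continuous on B and the matrix (a_{ij}(x)) is positive definite for every x ∈ B. Suppose w ∈ C²(B) satisfies L(w) ≥ 0 on B, w ≤ 0 on B, and w(x₀) = 0 for some x₀ ∈ B. Then w ≡ 0 on B. -/

import Mathlib

/-- Partial derivative `∂f/∂x_i` at `x`. -/
noncomputable def pd {n : ℕ} (f : EuclideanSpace ℝ (Fin n) → ℝ) (i : Fin n)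
    (x : EuclideanSpace ℝ (Fin n)) : ℝ :=
  fderiv ℝ f x (EuclideanSpace.single i 1)

/-- Second partial derivative `∂²f/∂x_i∂x_j` at `x`. -/
noncomputable def pd2 {n : ℕ} (f : EuclideanSpace ℝ (Fin n) → ℝ) (i j : Fin n)
    (x : EuclideanSpace ℝ (Fin n)) : ℝ :=
  pd (fun y => pd f i y) j x

/-- Expansion of a continuous linear functional on Euclidean space in coordinates. -/
lemma clm_expand {n : ℕ} (L : EuclideanSpace ℝ (Fin n) →L[ℝ] ℝ)
    (u : EuclideanSpace ℝ (Fin n)) :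
    L u = ∑ i, L (EuclideanSpace.single i 1) * u i := by
  have hu : u = ∑ i, u i • EuclideanSpace.single i (1:ℝ) := by
    ext j
    rw [WithLp.ofLp_sum, Finset.sum_apply]
    simp [EuclideanSpace.single_apply]
  conv_lhs => rw [hu]
  rw [map_sum]
  congr 1; ext i
  rw [map_smul]; simp [mul_comm]

lemma fderiv_expand {n : ℕ} (g : EuclideanSpace ℝ (Fin n) → ℝ) (x u : EuclideanSpace ℝ (Fin n)) :
    fderiv ℝ g x u = ∑ i, pd g i x * u i := clm_expand _ u

lemma pd_contDiffOn {n : ℕ} {f : EuclideanSpace ℝ (Fin n) → ℝ}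
    {U : Set (EuclideanSpace ℝ (Fin n))} (hU : IsOpen U) (hf : ContDiffOn ℝ 2 f U) (i : Fin n) :
    ContDiffOn ℝ 1 (pd f i) U := by
  have h1 : ContDiffOn ℝ 1 (fun x => fderiv ℝ f x) U :=
    hf.fderiv_of_isOpen hU (by norm_num)
  exact (ContinuousLinearMap.apply ℝ ℝ (EuclideanSpace.single i 1)).contDiff.comp_contDiffOn h1

lemma pd_differentiableAt {n : ℕ} {f : EuclideanSpace ℝ (Fin n) → ℝ}
    {U : Set (EuclideanSpace ℝ (Fin n))} (hU : IsOpen U) (hf : ContDiffOn ℝ 2 f U) (i : Fin n)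
    {x : EuclideanSpace ℝ (Fin n)} (hx : x ∈ U) :
    DifferentiableAt ℝ (pd f i) x :=
  (((pd_contDiffOn hU hf i).differentiableOn one_ne_zero) x hx).differentiableAt (hU.mem_nhds hx)

lemma pd2_continuousOn {n : ℕ} {f : EuclideanSpace ℝ (Fin n) → ℝ}
    {U : Set (EuclideanSpace ℝ (Fin n))} (hU : IsOpen U) (hf : ContDiffOn ℝ 2 f U) (i j : Fin n) :
    ContinuousOn (pd2 f i j) U := by
  have h1 : ContinuousOn (fun x => fderiv ℝ (pd f i) x) U :=
    (pd_contDiffOn hU hf i).continuousOn_fderiv_of_isOpen hU le_rfl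
  exact (ContinuousLinearMap.apply ℝ ℝ (EuclideanSpace.single j 1)).continuous.comp_continuousOn h1

lemma hessian_nonpos {n : ℕ} {v : EuclideanSpace ℝ (Fin n) → ℝ}
    {U : Set (EuclideanSpace ℝ (Fin n))}
    (hU : IsOpen U) (hv : ContDiffOn ℝ 2 v U) {q : EuclideanSpace ℝ (Fin n)} (hq : q ∈ U)
    (hmax : IsLocalMax v q) (u : EuclideanSpace ℝ (Fin n)) :
    ∑ i, ∑ j, pd2 v i j q * u i * u j ≤ 0 := by
  by_contra hpos
  push_neg at hpos
  set Q : EuclideanSpace ℝ (Fin n) → ℝ := fun x => ∑ i, ∑ j, pd2 v i j x * u i * u j with hQ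
  have hu : u ≠ 0 := by
    rintro rfl
    simp [hQ] at hpos
  have hQcont : ContinuousOn Q U := by
    apply continuousOn_finset_sum
    intro i _
    apply continuousOn_finset_sum
    intro j _
    exact ((pd2_continuousOn hU hv i j).mul continuousOn_const).mul continuousOn_const
  -- open set where things are nice
  have hV1 : IsOpen (U ∩ Q ⁻¹' Set.Ioi 0) :=
    hQcont.isOpen_inter_preimage hU isOpen_Ioi
  obtain ⟨W, hWmax, hWopen, hWq⟩ := eventually_nhds_iff.mp hmax
  have hVopen : IsOpen (U ∩ Q ⁻¹' Set.Ioi 0 ∩ W) := hV1.inter hWopen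
  have hqV : q ∈ U ∩ Q ⁻¹' Set.Ioi 0 ∩ W := ⟨⟨hq, hpos⟩, hWq⟩
  obtain ⟨δ, hδpos, hδball⟩ := Metric.isOpen_iff.mp hVopen q hqV
  have hunorm : 0 < ‖u‖ := norm_pos_iff.mpr hu
  set T : ℝ := δ / (2 * ‖u‖) with hT
  have hTpos : 0 < T := by positivity
  set ℓ : ℝ → EuclideanSpace ℝ (Fin n) := fun t => q + t • u with hℓ
  have hball : ∀ t : ℝ, |t| ≤ T → ℓ t ∈ Metric.ball q δ := by
    intro t ht
    have : dist (ℓ t) q = |t| * ‖u‖ := by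
      simp [hℓ, dist_eq_norm, norm_smul, abs_eq_self.mpr, Real.norm_eq_abs]
    rw [Metric.mem_ball, this]
    calc |t| * ‖u‖ ≤ T * ‖u‖ := by nlinarith
      _ = δ / 2 := by rw [hT]; field_simp
      _ < δ := by linarith
  have hballU : ∀ t : ℝ, |t| ≤ T → ℓ t ∈ U := fun t ht => (hδball (hball t ht)).1.1
  have hℓd : ∀ t : ℝ, HasDerivAt ℓ u t := by
    intro t
    simpa [hℓ] using ((hasDerivAt_id t).smul_const u).const_add q
  set G : ℝ → ℝ := fun t => ∑ i, pd v i (ℓ t) * u i with hG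
  -- derivative of g = v ∘ ℓ
  have hgd : ∀ t : ℝ, |t| ≤ T → HasDerivAt (fun s => v (ℓ s)) (G t) t := by
    intro t ht
    have hdv : DifferentiableAt ℝ v (ℓ t) :=
      ((hv.differentiableOn (by norm_num)) _ (hballU t ht)).differentiableAt
        (hU.mem_nhds (hballU t ht))
    have := hdv.hasFDerivAt.comp_hasDerivAt t (hℓd t)
    have heq : fderiv ℝ v (ℓ t) u = G t := fderiv_expand v (ℓ t) u
    rw [heq] at this
    exact this
  -- derivative of G
  have hGd : ∀ t : ℝ, |t| ≤ T → HasDerivAt G (Q (ℓ t)) t := by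
    intro t ht
    have : HasDerivAt (fun s => ∑ i, pd v i (ℓ s) * u i)
        (∑ i, (∑ j, pd2 v i j (ℓ t) * u j) * u i) t := by
      apply HasDerivAt.fun_sum
      intro i _
      have hd : DifferentiableAt ℝ (pd v i) (ℓ t) :=
        pd_differentiableAt hU hv i (hballU t ht)
      have h1 := hd.hasFDerivAt.comp_hasDerivAt t (hℓd t)
      have heq : fderiv ℝ (pd v i) (ℓ t) u = ∑ j, pd2 v i j (ℓ t) * u j :=
        fderiv_expand (pd v i) (ℓ t) u
      rw [heq] at h1
      exact h1.mul_const (u i)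
    convert this using 1
    rw [hQ]
    refine Finset.sum_congr rfl fun i _ => ?_
    rw [Finset.sum_mul]
    exact Finset.sum_congr rfl fun j _ => by ring
  -- G 0 = 0 since fderiv v q = 0
  have hG0 : G 0 = 0 := by
    have h0 : fderiv ℝ v q = 0 := hmax.fderiv_eq_zero
    have : ∀ i, pd v i q = 0 := by
      intro i; unfold pd; rw [h0]; rfl
    simp [hG, hℓ, this]
  -- G is positive on (0, T]
  have hGmono : StrictMonoOn G (Set.Icc 0 T) := by
    apply strictMonoOn_of_deriv_pos (convex_Icc 0 T)
    · apply ContinuousOn.congr (f := G) ?_ (fun x _ => rfl)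
      intro t ht
      have hd := hGd t (by rw [abs_le]; exact ⟨by linarith [ht.1], ht.2⟩)
      exact hd.continuousAt.continuousWithinAt
    · intro t ht
      rw [interior_Icc] at ht
      have habs : |t| ≤ T := by rw [abs_le]; constructor <;> [linarith [ht.1]; linarith [ht.2]]
      rw [(hGd t habs).deriv]
      exact (hδball (hball t habs)).1.2
  have hGpos : ∀ t ∈ Set.Ioc 0 T, 0 < G t := by
    intro t ht
    have := hGmono (Set.left_mem_Icc.mpr hTpos.le) ⟨ht.1.le, ht.2⟩ ht.1
    rwa [hG0] at this
  -- g strictly increasing on [0, T]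
  have hgmono : StrictMonoOn (fun s => v (ℓ s)) (Set.Icc 0 T) := by
    apply strictMonoOn_of_deriv_pos (convex_Icc 0 T)
    · intro t ht
      have hd := hgd t (by rw [abs_le]; exact ⟨by linarith [ht.1], ht.2⟩)
      exact hd.continuousAt.continuousWithinAt
    · intro t ht
      rw [interior_Icc] at ht
      have habs : |t| ≤ T := by rw [abs_le]; constructor <;> [linarith [ht.1]; linarith [ht.2]]
      rw [(hgd t habs).deriv]
      exact hGpos t ⟨ht.1, ht.2.le⟩
  have hlt : v (ℓ 0) < v (ℓ T) :=
    hgmono (Set.left_mem_Icc.mpr hTpos.le) (Set.right_mem_Icc.mpr hTpos.le) hTpos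
  have hle : v (ℓ T) ≤ v q := hWmax _ (hδball (hball T (by rw [abs_of_pos hTpos]))).2
  have : v (ℓ 0) = v q := by simp [hℓ]
  linarith


lemma trace_ineq {n : ℕ} (A H : Fin n → Fin n → ℝ) (hAs : ∀ i j, A i j = A j i)
    (hA : ∀ u : Fin n → ℝ, 0 ≤ ∑ i, ∑ j, A i j * u i * u j)
    (hH : ∀ u : Fin n → ℝ, ∑ i, ∑ j, H i j * u i * u j ≤ 0) :
    ∑ i, ∑ j, A i j * H i j ≤ 0 := by
  classical
  set M : Matrix (Fin n) (Fin n) ℝ := Matrix.of A with hM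
  have hMps : M.PosSemidef := by
    refine Matrix.PosSemidef.of_dotProduct_mulVec_nonneg ?_ ?_
    · ext i j
      simp [Matrix.conjTranspose_apply, hM, hAs j i]
    · intro x
      have := hA x
      simp only [dotProduct, Matrix.mulVec, star_trivial]
      calc (0:ℝ) ≤ ∑ i, ∑ j, A i j * x i * x j := hA x
        _ = ∑ i, x i * ∑ j, A i j * x j := by
            congr 1; ext i; rw [Finset.mul_sum]; congr 1; ext j; ring
        _ = ∑ i, x i * (fun j => ∑ k, A j k * x k) i := rfl
  open scoped MatrixOrder in obtain ⟨Bm, hB⟩ := CStarAlgebra.nonneg_iff_eq_star_mul_self.mp hMps.nonneg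
  have hAeq : ∀ i j, A i j = ∑ k, Bm k i * Bm k j := by
    intro i j
    have : M i j = (Bm.conjTranspose * Bm) i j := by rw [hB]; rfl
    simpa [Matrix.mul_apply, Matrix.conjTranspose_apply, hM] using this
  calc ∑ i, ∑ j, A i j * H i j = ∑ i, ∑ j, (∑ k, Bm k i * Bm k j) * H i j := by
        simp_rw [hAeq]
    _ = ∑ i, ∑ j, ∑ k, H i j * Bm k i * Bm k j := by
        congr 1; ext i; congr 1; ext j
        rw [Finset.sum_mul]; congr 1; ext k; ring
    _ = ∑ i, ∑ k, ∑ j, H i j * Bm k i * Bm k j :=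
        Finset.sum_congr rfl (fun i _ => Finset.sum_comm)
    _ = ∑ k, ∑ i, ∑ j, H i j * Bm k i * Bm k j := Finset.sum_comm
    _ = ∑ k, ∑ i, ∑ j, H i j * (fun i => Bm k i) i * (fun i => Bm k i) j := rfl
    _ ≤ 0 := Finset.sum_nonpos fun k _ => hH (fun i => Bm k i)

section Barrier
variable {n : ℕ} (p : EuclideanSpace ℝ (Fin n)) (α r : ℝ)

/-- squared distance to `p` in coordinates -/
noncomputable def phiF (x : EuclideanSpace ℝ (Fin n)) : ℝ := ∑ k, (x k - p k)^2

/-- the barrier function -/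
noncomputable def barF (x : EuclideanSpace ℝ (Fin n)) : ℝ :=
  Real.exp (-α * phiF p x) - Real.exp (-α * r^2)

lemma phiF_eq_dist (x : EuclideanSpace ℝ (Fin n)) : phiF p x = (dist x p)^2 := by
  rw [EuclideanSpace.dist_eq, Real.sq_sqrt]
  · simp [phiF, Real.dist_eq, sq_abs]
  · exact Finset.sum_nonneg fun k _ => sq_nonneg _

lemma coord_hasFDerivAt (k : Fin n) (x : EuclideanSpace ℝ (Fin n)) :
    HasFDerivAt (fun y : EuclideanSpace ℝ (Fin n) => y k)
      (EuclideanSpace.proj k : EuclideanSpace ℝ (Fin n) →L[ℝ] ℝ) x :=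
  (EuclideanSpace.proj k : EuclideanSpace ℝ (Fin n) →L[ℝ] ℝ).hasFDerivAt

lemma phiF_hasFDerivAt (x : EuclideanSpace ℝ (Fin n)) :
    HasFDerivAt (phiF p)
      (∑ k, (2*(x k - p k)) • (EuclideanSpace.proj k : EuclideanSpace ℝ (Fin n) →L[ℝ] ℝ)) x := by
  have : ∀ k : Fin n, HasFDerivAt (fun y : EuclideanSpace ℝ (Fin n) => (y k - p k)^2)
      ((2*(x k - p k)) • (EuclideanSpace.proj k : EuclideanSpace ℝ (Fin n) →L[ℝ] ℝ)) x := by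
    intro k
    have h1 : HasFDerivAt (fun y : EuclideanSpace ℝ (Fin n) => y k - p k)
        (EuclideanSpace.proj k : EuclideanSpace ℝ (Fin n) →L[ℝ] ℝ) x :=
      (coord_hasFDerivAt k x).sub_const (p k)
    have h2 : HasDerivAt (fun s : ℝ => s^2) (2*(x k - p k)) (x k - p k) := by
      simpa using (hasDerivAt_pow 2 (x k - p k))
    exact h2.comp_hasFDerivAt x h1
  exact HasFDerivAt.fun_sum (fun k _ => this k)

lemma barF_hasFDerivAt (x : EuclideanSpace ℝ (Fin n)) :
    HasFDerivAt (barF p α r)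
      ((Real.exp (-α * phiF p x) * (-α)) •
        (∑ k, (2*(x k - p k)) • (EuclideanSpace.proj k : EuclideanSpace ℝ (Fin n) →L[ℝ] ℝ))) x := by
  have h1 : HasFDerivAt (fun y => -α * phiF p y)
      ((-α) • (∑ k, (2*(x k - p k)) • (EuclideanSpace.proj k : EuclideanSpace ℝ (Fin n) →L[ℝ] ℝ))) x :=
    (phiF_hasFDerivAt p x).const_smul (-α)
  have h2 : HasDerivAt Real.exp (Real.exp (-α * phiF p x)) (-α * phiF p x) := Real.hasDerivAt_exp _
  have h3 := h2.comp_hasFDerivAt x h1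
  have h4 := h3.sub_const (Real.exp (-α * r^2))
  apply h4.congr_fderiv
  rw [smul_smul]

lemma derivCLM_apply_single (x : EuclideanSpace ℝ (Fin n)) (i : Fin n) :
    (∑ k, (2*(x k - p k)) • (EuclideanSpace.proj k : EuclideanSpace ℝ (Fin n) →L[ℝ] ℝ))
      (EuclideanSpace.single i 1) = 2*(x i - p i) := by
  rw [ContinuousLinearMap.sum_apply]
  have : ∀ k : Fin n, ((2*(x k - p k)) • (EuclideanSpace.proj k : EuclideanSpace ℝ (Fin n) →L[ℝ] ℝ))
      (EuclideanSpace.single i 1) = if k = i then 2*(x k - p k) else 0 := by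
    intro k
    rw [ContinuousLinearMap.smul_apply]
    simp [PiLp.proj_apply, EuclideanSpace.single_apply]
  simp_rw [this]
  simp

lemma barF_pd (i : Fin n) (x : EuclideanSpace ℝ (Fin n)) :
    pd (barF p α r) i x = -2*α*(x i - p i) * Real.exp (-α * phiF p x) := by
  unfold pd
  rw [(barF_hasFDerivAt p α r x).fderiv, ContinuousLinearMap.smul_apply,
    derivCLM_apply_single]
  simp only [smul_eq_mul]
  ring

lemma barF_pd2 (i j : Fin n) (x : EuclideanSpace ℝ (Fin n)) :
    pd2 (barF p α r) i j x =
      (4*α^2*(x i - p i)*(x j - p j) - (if i = j then 2*α else 0)) *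
        Real.exp (-α * phiF p x) := by
  unfold pd2
  have hfun : (fun y => pd (barF p α r) i y) =
      fun y => (-2*α*(y i - p i)) * Real.exp (-α * phiF p y) := by
    funext y; rw [barF_pd]
  rw [hfun]
  unfold pd
  have h1 : HasFDerivAt (fun y : EuclideanSpace ℝ (Fin n) => -2*α*(y i - p i))
      ((-2*α) • (EuclideanSpace.proj i : EuclideanSpace ℝ (Fin n) →L[ℝ] ℝ)) x := by
    have := ((coord_hasFDerivAt i x).sub_const (p i)).const_smul (-2*α)
    exact this
  have h2 : HasFDerivAt (fun y => Real.exp (-α * phiF p y))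
      ((Real.exp (-α * phiF p x) * (-α)) •
        (∑ k, (2*(x k - p k)) • (EuclideanSpace.proj k : EuclideanSpace ℝ (Fin n) →L[ℝ] ℝ))) x := by
    have := barF_hasFDerivAt p α r x
    have h3 : HasFDerivAt (fun y => barF p α r y + Real.exp (-α * r^2))
        ((Real.exp (-α * phiF p x) * (-α)) •
          (∑ k, (2*(x k - p k)) • (EuclideanSpace.proj k : EuclideanSpace ℝ (Fin n) →L[ℝ] ℝ))) x :=
      this.add_const _
    have h4 : (fun y => barF p α r y + Real.exp (-α * r^2)) =
        fun y => Real.exp (-α * phiF p y) := by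
      funext y; unfold barF; ring
    rwa [h4] at h3
  have hprod := h1.fun_mul h2
  rw [hprod.fderiv]
  have hproj : (EuclideanSpace.proj i : EuclideanSpace ℝ (Fin n) →L[ℝ] ℝ)
      (EuclideanSpace.single j 1) = if i = j then (1:ℝ) else 0 := by
    simp [PiLp.proj_apply, EuclideanSpace.single_apply]
  simp only [ContinuousLinearMap.add_apply, ContinuousLinearMap.smul_apply,
    derivCLM_apply_single p x j, hproj, smul_eq_mul]
  split <;> ring

lemma barF_contDiff : ContDiff ℝ 2 (barF p α r) := by
  have hφ : ContDiff ℝ 2 (phiF p) := by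
    apply ContDiff.sum
    intro k _
    exact ((EuclideanSpace.proj k : EuclideanSpace ℝ (Fin n) →L[ℝ] ℝ).contDiff.sub
      contDiff_const).pow 2
  exact (Real.contDiff_exp.of_le le_top |>.comp (contDiff_const.mul hφ)).sub contDiff_const

end Barrier


lemma derivCLM_apply {n : ℕ} (p x u : EuclideanSpace ℝ (Fin n)) :
    (∑ k, (2*(x k - p k)) • (EuclideanSpace.proj k : EuclideanSpace ℝ (Fin n) →L[ℝ] ℝ)) u
      = ∑ k, 2*(x k - p k) * u k := by
  rw [ContinuousLinearMap.sum_apply]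
  refine Finset.sum_congr rfl fun k _ => ?_
  rw [ContinuousLinearMap.smul_apply]
  simp [PiLp.proj_apply]

lemma pd_add_mul {n : ℕ} {f : EuclideanSpace ℝ (Fin n) → ℝ}
    {U : Set (EuclideanSpace ℝ (Fin n))} (hU : IsOpen U) (hf : ContDiffOn ℝ 2 f U)
    (g : EuclideanSpace ℝ (Fin n) → ℝ) (hg : ContDiff ℝ 2 g) (ε : ℝ)
    {x : EuclideanSpace ℝ (Fin n)} (hx : x ∈ U) (i : Fin n) :
    pd (fun y => f y + ε * g y) i x = pd f i x + ε * pd g i x := by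
  have hdf : DifferentiableAt ℝ f x :=
    ((hf.differentiableOn (by norm_num)) x hx).differentiableAt (hU.mem_nhds hx)
  have hdg : DifferentiableAt ℝ g x := (hg.differentiable (by norm_num)).differentiableAt
  unfold pd
  rw [fderiv_fun_add hdf (hdg.const_mul ε), fderiv_const_mul hdg]
  simp [smul_eq_mul]

lemma pd_g_differentiableAt {n : ℕ} {g : EuclideanSpace ℝ (Fin n) → ℝ} (hg : ContDiff ℝ 2 g)
    (i : Fin n) (x : EuclideanSpace ℝ (Fin n)) : DifferentiableAt ℝ (pd g i) x :=
  pd_differentiableAt isOpen_univ hg.contDiffOn i (Set.mem_univ x)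

lemma pd2_add_mul {n : ℕ} {f : EuclideanSpace ℝ (Fin n) → ℝ}
    {U : Set (EuclideanSpace ℝ (Fin n))} (hU : IsOpen U) (hf : ContDiffOn ℝ 2 f U)
    (g : EuclideanSpace ℝ (Fin n) → ℝ) (hg : ContDiff ℝ 2 g) (ε : ℝ)
    {x : EuclideanSpace ℝ (Fin n)} (hx : x ∈ U) (i j : Fin n) :
    pd2 (fun y => f y + ε * g y) i j x = pd2 f i j x + ε * pd2 g i j x := by
  unfold pd2
  have hev : (fun y => pd (fun z => f z + ε * g z) i y)
      =ᶠ[nhds x] (fun y => pd f i y + ε * pd g i y) :=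
    Filter.eventually_of_mem (hU.mem_nhds hx) (fun y hy => pd_add_mul hU hf g hg ε hy i)
  unfold pd at hev ⊢
  rw [hev.fderiv_eq]
  have hdf : DifferentiableAt ℝ (pd f i) x := pd_differentiableAt hU hf i hx
  have hdg : DifferentiableAt ℝ (pd g i) x := pd_g_differentiableAt hg i x
  have H : HasFDerivAt (fun y => (fderiv ℝ f y) (EuclideanSpace.single i 1)
      + ε * (fderiv ℝ g y) (EuclideanSpace.single i 1))
      (fderiv ℝ (pd f i) x + ε • fderiv ℝ (pd g i) x) x :=
    hdf.hasFDerivAt.add (hdg.hasFDerivAt.const_mul ε)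
  rw [H.fderiv]
  simp only [ContinuousLinearMap.add_apply, ContinuousLinearMap.smul_apply, smul_eq_mul]
  rfl

set_option maxHeartbeats 2000000 in
lemma key {n : ℕ} (B : Set (EuclideanSpace ℝ (Fin n))) (hB : IsOpen B)
    (a : Fin n → Fin n → EuclideanSpace ℝ (Fin n) → ℝ)
    (b : Fin n → EuclideanSpace ℝ (Fin n) → ℝ) (c : EuclideanSpace ℝ (Fin n) → ℝ)
    (hsym : ∀ i j, ∀ x ∈ B, a i j x = a j i x)
    (ha : ∀ i j, ContinuousOn (a i j) B) (hb : ∀ i, ContinuousOn (b i) B)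
    (hc : ContinuousOn c B) (hcle : ∀ x ∈ B, c x ≤ 0)
    (hell : ∀ x ∈ B, ∀ ξ : EuclideanSpace ℝ (Fin n), ξ ≠ 0 →
      0 < ∑ i, ∑ j, a i j x * ξ i * ξ j)
    (w : EuclideanSpace ℝ (Fin n) → ℝ) (hw : ContDiffOn ℝ 2 w B)
    (hLw : ∀ x ∈ B,
      0 ≤ ∑ i, ∑ j, a i j x * pd2 w i j x + ∑ i, b i x * pd w i x + c x * w x)
    (hwle : ∀ x ∈ B, w x ≤ 0)
    (p z : EuclideanSpace ℝ (Fin n)) (r : ℝ) (hr : 0 < r)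
    (hballB : Metric.closedBall p r ⊆ B)
    (hneg : ∀ x ∈ Metric.ball p r, w x < 0)
    (hzd : dist z p = r) (hwz : w z = 0) : False := by
  classical
  set K : Set (EuclideanSpace ℝ (Fin n)) :=
    Metric.closedBall p r \ Metric.ball p (r/2) with hK
  have hKB : K ⊆ B := fun x hx => hballB hx.1
  have hKc : IsCompact K := (isCompact_closedBall p r).diff Metric.isOpen_ball
  have hzB : z ∈ B := hballB (Metric.mem_closedBall.mpr hzd.le)
  have hzK : z ∈ K := by
    constructor
    · exact Metric.mem_closedBall.mpr hzd.le
    · simp only [Metric.mem_ball, hzd]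
      intro hcon; linarith
  have hKdist : ∀ x ∈ K, r/2 ≤ dist x p ∧ dist x p ≤ r := by
    intro x hx
    refine ⟨?_, Metric.mem_closedBall.mp hx.1⟩
    have := hx.2; simp only [Metric.mem_ball, not_lt] at this; exact this
  have hKne : ∀ x ∈ K, x ≠ p := by
    intro x hx hcon
    have := (hKdist x hx).1
    rw [hcon, dist_self] at this; linarith
  -- coordinate continuity
  have hcoord : ∀ i : Fin n, Continuous fun x : EuclideanSpace ℝ (Fin n) => x i - p i :=
    fun i => ((EuclideanSpace.proj i (𝕜 := ℝ)).continuous).sub continuous_const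
  -- ellipticity quantities
  set S : EuclideanSpace ℝ (Fin n) → ℝ :=
    fun x => ∑ i, ∑ j, a i j x * (x i - p i) * (x j - p j) with hS
  have hScont : ContinuousOn S K := by
    apply continuousOn_finset_sum; intro i _
    apply continuousOn_finset_sum; intro j _
    exact (((ha i j).mono hKB).mul (hcoord i).continuousOn).mul (hcoord j).continuousOn
  have hSpos : ∀ x ∈ K, 0 < S x := by
    intro x hx
    have hne : x - p ≠ 0 := sub_ne_zero.mpr (hKne x hx)
    have := hell x (hKB hx) (x - p) hne
    simpa [PiLp.sub_apply, hS] using this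
  obtain ⟨xm, hxmK, hxmmin⟩ := hKc.exists_isMinOn ⟨z, hzK⟩ hScont
  set lam : ℝ := S xm with hlam
  have hlam0 : 0 < lam := hSpos xm hxmK
  have hlamle : ∀ x ∈ K, lam ≤ S x := fun x hx => hxmmin hx
  -- first order bound
  set T : EuclideanSpace ℝ (Fin n) → ℝ :=
    fun x => ∑ i, a i i x + ∑ i, b i x * (x i - p i) with hT
  have hTcont : ContinuousOn T K := by
    apply ContinuousOn.add
    · exact continuousOn_finset_sum _ fun i _ => ((ha i i).mono hKB)
    · exact continuousOn_finset_sum _ fun i _ =>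
        (((hb i).mono hKB).mul (hcoord i).continuousOn)
  obtain ⟨xM, hxMK, hxMmax⟩ := hKc.exists_isMaxOn ⟨z, hzK⟩ hTcont
  set M : ℝ := max (T xM) 0 with hM
  have hMnn : 0 ≤ M := le_max_right _ _
  have hMle : ∀ x ∈ K, T x ≤ M := fun x hx => le_trans (hxMmax hx) (le_max_left _ _)
  -- bound for c
  obtain ⟨xc, hxcK, hxcmin⟩ := hKc.exists_isMinOn ⟨z, hzK⟩ (hc.mono hKB)
  set C : ℝ := max (-(c xc)) 0 with hC
  have hCnn : 0 ≤ C := le_max_right _ _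
  have hCle : ∀ x ∈ K, -C ≤ c x := by
    intro x hx
    have h1 : c xc ≤ c x := hxcmin hx
    have h2 : -(c xc) ≤ C := le_max_left _ _
    linarith
  -- choice of alpha
  set α : ℝ := max 1 ((2*M + C + 1)/(4*lam)) with hα
  have hα1 : 1 ≤ α := le_max_left _ _
  have hαpos : 0 < α := lt_of_lt_of_le one_pos hα1
  have hα2 : 2*M + C + 1 ≤ 4*α*lam := by
    have h1 : (2*M + C + 1)/(4*lam) ≤ α := le_max_right _ _
    have h2 : 0 < 4*lam := by linarith
    calc 2*M + C + 1 = ((2*M + C + 1)/(4*lam)) * (4*lam) := by field_simp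
      _ ≤ α * (4*lam) := by
          apply mul_le_mul_of_nonneg_right h1 h2.le
      _ = 4*α*lam := by ring
  have hαkey : 2*α*M + C < 4*α^2*lam := by nlinarith
  -- the barrier
  set h : EuclideanSpace ℝ (Fin n) → ℝ := barF p α r with hh
  set E : EuclideanSpace ℝ (Fin n) → ℝ := fun x => Real.exp (-α * phiF p x) with hE
  have hEpos : ∀ x, 0 < E x := fun x => Real.exp_pos _
  have hphiK : ∀ x ∈ K, phiF p x ≤ r^2 := by
    intro x hx
    rw [phiF_eq_dist]
    have := (hKdist x hx).2
    have h0 : (0:ℝ) ≤ dist x p := dist_nonneg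
    nlinarith
  have hh_nonneg : ∀ x ∈ K, 0 ≤ h x := by
    intro x hx
    have : Real.exp (-α * r^2) ≤ Real.exp (-α * phiF p x) := by
      apply Real.exp_le_exp.mpr
      have := hphiK x hx; nlinarith
    simp only [hh, barF]; linarith
  have hh_le : ∀ x, h x ≤ E x := by
    intro x
    simp only [hh, hE, barF]
    have : 0 < Real.exp (-α * r^2) := Real.exp_pos _
    linarith
  -- L h > 0 on K
  have hLh : ∀ x ∈ K, 0 < ∑ i, ∑ j, a i j x * pd2 h i j x +
      ∑ i, b i x * pd h i x + c x * h x := by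
    intro x hx
    have e2 : ∑ i, ∑ j, a i j x * pd2 h i j x
        = E x * (4*α^2 * S x) - E x * (2*α * ∑ i, a i i x) := by
      have : ∀ i j, a i j x * pd2 h i j x
          = (4*α^2*E x) * (a i j x * (x i - p i) * (x j - p j))
            - (if i = j then 2*α*E x * a i j x else 0) := by
        intro i j
        rw [hh, barF_pd2]
        by_cases hij : i = j <;> simp [hij, hE] <;> ring
      simp_rw [this, Finset.sum_sub_distrib]
      congr 1
      · calc ∑ i, ∑ j, 4*α^2*E x * (a i j x * (x i - p i) * (x j - p j))
            = 4*α^2*E x * ∑ i, ∑ j, a i j x * (x i - p i) * (x j - p j) := by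
              rw [Finset.mul_sum]
              exact Finset.sum_congr rfl fun i _ => (Finset.mul_sum _ _ _).symm
          _ = E x * (4*α^2 * S x) := by rw [hS]; ring
      · have hrow : ∀ i : Fin n, ∑ j, (if i = j then 2*α*E x * a i j x else 0)
            = 2*α*E x * a i i x := by
          intro i
          rw [Finset.sum_ite_eq Finset.univ i (fun j => 2*α*E x * a i j x)]
          simp
        simp_rw [hrow]
        rw [Finset.mul_sum, Finset.mul_sum]
        exact Finset.sum_congr rfl fun i _ => by ring
    have e3 : ∑ i, b i x * pd h i x = -(E x * (2*α * ∑ i, b i x * (x i - p i))) := by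
      have hterm : ∀ i, b i x * pd h i x = -(2*α*E x * (b i x * (x i - p i))) := by
        intro i
        rw [hh, barF_pd]
        simp only [hE]; ring
      simp_rw [hterm]
      rw [Finset.sum_neg_distrib]
      congr 1
      rw [Finset.mul_sum, Finset.mul_sum]
      exact Finset.sum_congr rfl fun i _ => by ring
    rw [e2, e3]
    have hS' := hlamle x hx
    have hT' := hMle x hx
    have hc' := hCle x hx
    have hh0 := hh_nonneg x hx
    have hhE := hh_le x
    have hEx := hEpos x
    have hch : -C * E x ≤ c x * h x := by
      have s1 : -C * h x ≤ c x * h x := mul_le_mul_of_nonneg_right hc' hh0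
      have s2 : 0 ≤ C * (E x - h x) := mul_nonneg hCnn (by linarith)
      nlinarith
    have k2 : 4*α^2*lam - 2*α*M ≤ 4*α^2*S x - 2*α*T x := by
      nlinarith [mul_nonneg (by positivity : (0:ℝ) ≤ 4*α^2) (sub_nonneg.mpr hS'),
        mul_nonneg (by positivity : (0:ℝ) ≤ 2*α) (sub_nonneg.mpr hT')]
    have k4 : 0 < E x * (4*α^2*lam - 2*α*M - C) := by
      apply mul_pos hEx; linarith
    have k4' : 0 < E x * (4*α^2*lam - 2*α*M) - C * E x := by nlinarith [k4]
    have k5 := mul_le_mul_of_nonneg_left k2 hEx.le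
    have hTx : T x = ∑ i, a i i x + ∑ i, b i x * (x i - p i) := rfl
    have egoal : E x * (4*α^2*S x) - E x*(2*α*∑ i, a i i x)
        + -(E x * (2*α * ∑ i, b i x * (x i - p i))) + c x * h x
        = E x * (4*α^2*S x - 2*α*T x) + c x * h x := by rw [hTx]; ring
    linarith [egoal, k4', k5, hch]
  -- inner sphere point and epsilon
  set q₀ : EuclideanSpace ℝ (Fin n) := p + (2⁻¹ : ℝ) • (z - p) with hq₀
  have hq₀d : dist q₀ p = r/2 := by
    rw [hq₀, dist_eq_norm, add_sub_cancel_left, norm_smul]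
    have : ‖z - p‖ = r := by rw [← dist_eq_norm, hzd]
    rw [this]
    norm_num
    ring
  set Sρ : Set (EuclideanSpace ℝ (Fin n)) := Metric.sphere p (r/2) with hSρdef
  have hSρK : Sρ ⊆ K := by
    intro y hy
    have hyd : dist y p = r/2 := hy
    constructor
    · rw [Metric.mem_closedBall, hyd]; linarith
    · rw [Metric.mem_ball, hyd]; simp
  have hSρball : Sρ ⊆ Metric.ball p r := by
    intro y hy
    have hyd : dist y p = r/2 := hy
    rw [Metric.mem_ball, hyd]; linarith
  have hq₀S : q₀ ∈ Sρ := hq₀d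
  obtain ⟨y₀, hy₀, hy₀max⟩ := (isCompact_sphere p (r/2)).exists_isMaxOn ⟨q₀, hq₀S⟩
    ((hw.continuousOn).mono (fun y hy => hKB (hSρK hy)))
  set m : ℝ := w y₀ with hm
  have hm0 : m < 0 := hneg y₀ (hSρball hy₀)
  set ε : ℝ := -m with hεdef
  have hεpos : 0 < ε := by simp [hεdef]; linarith
  set v : EuclideanSpace ℝ (Fin n) → ℝ := fun x => w x + ε * h x with hv
  have hvcont : ContinuousOn v K :=
    ((hw.continuousOn).mono hKB).add
      (continuousOn_const.mul ((barF_contDiff p α r).continuous.continuousOn))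
  -- weak maximum principle: v ≤ 0 on K
  have hvK : ∀ x ∈ K, v x ≤ 0 := by
    obtain ⟨q, hqK, hqmax⟩ := hKc.exists_isMaxOn ⟨z, hzK⟩ hvcont
    intro x hx
    by_contra hcon
    push_neg at hcon
    have hvq : 0 < v q := lt_of_lt_of_le hcon (hqmax hx)
    have hq_out : dist q p ≠ r := by
      intro hd
      have hφ : phiF p q = r^2 := by rw [phiF_eq_dist, hd]
      have hhq : h q = 0 := by simp [hh, barF, hφ]
      have hwq := hwle q (hKB hqK)
      have : v q = w q := by rw [hv]; simp [hhq]
      linarith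
    have hq_in : dist q p ≠ r/2 := by
      intro hd
      have hyS : q ∈ Sρ := hd
      have h1 : w q ≤ m := hy₀max hyS
      have hH0le : h q ≤ 1 := by
        have h2 : h q ≤ E q := hh_le q
        have h3 : E q ≤ 1 := by
          rw [hE]
          apply Real.exp_le_one_iff.mpr
          have : 0 ≤ phiF p q := by
            rw [phiF_eq_dist]; positivity
          nlinarith
        linarith
      have hH0nn : 0 ≤ h q := hh_nonneg q hqK
      have : v q = w q + ε * h q := rfl
      nlinarith
    have hqlt : r/2 < dist q p ∧ dist q p < r := by
      rcases hKdist q hqK with ⟨h1, h2⟩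
      exact ⟨lt_of_le_of_ne h1 (Ne.symm hq_in), lt_of_le_of_ne h2 hq_out⟩
    set U : Set (EuclideanSpace ℝ (Fin n)) :=
      Metric.ball p r ∩ (Metric.closedBall p (r/2))ᶜ with hUdef
    have hUopen : IsOpen U := Metric.isOpen_ball.inter Metric.isClosed_closedBall.isOpen_compl
    have hUK : U ⊆ K := by
      intro y hy
      refine ⟨Metric.ball_subset_closedBall hy.1, ?_⟩
      have := hy.2
      simp only [Set.mem_compl_iff, Metric.mem_closedBall, not_le] at this
      simp only [Metric.mem_ball, not_lt]
      linarith
    have hqU : q ∈ U := by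
      constructor
      · rw [Metric.mem_ball]; exact hqlt.2
      · simp only [Set.mem_compl_iff, Metric.mem_closedBall, not_le]; exact hqlt.1
    have hloc : IsLocalMax v q :=
      Filter.eventually_of_mem (hUopen.mem_nhds hqU) (fun y hy => hqmax (hUK hy))
    have hfdv : fderiv ℝ v q = 0 := hloc.fderiv_eq_zero
    have hpdv : ∀ i, pd v i q = 0 := by
      intro i; unfold pd; rw [hfdv]; rfl
    have hvC2 : ContDiffOn ℝ 2 v U := by
      rw [hv]
      exact (hw.mono (fun y hy => hKB (hUK hy))).add
        ((contDiff_const.mul (barF_contDiff p α r)).contDiffOn)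
    have hqB : q ∈ B := hKB hqK
    have hHess : ∀ u : Fin n → ℝ, ∑ i, ∑ j, pd2 v i j q * u i * u j ≤ 0 := by
      intro u
      have := hessian_nonpos hUopen hvC2 hqU hloc ((WithLp.equiv 2 (Fin n → ℝ)).symm u)
      simpa [WithLp.equiv_symm_apply, PiLp.toLp_apply] using this
    have hA : ∀ u : Fin n → ℝ, 0 ≤ ∑ i, ∑ j, a i j q * u i * u j := by
      intro u
      by_cases hu : u = 0
      · simp [hu]
      · have hne : (WithLp.equiv 2 (Fin n → ℝ)).symm u ≠ 0 := by
          intro h0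
          apply hu
          have := congrArg (WithLp.equiv 2 (Fin n → ℝ)) h0
          simpa using this
        have := (hell q hqB _ hne).le
        simpa [WithLp.equiv_symm_apply, PiLp.toLp_apply] using this
    have htr : ∑ i, ∑ j, a i j q * pd2 v i j q ≤ 0 :=
      trace_ineq (fun i j => a i j q) (fun i j => pd2 v i j q)
        (fun i j => hsym i j q hqB) hA hHess
    have hlin2 : ∀ i j, pd2 v i j q = pd2 w i j q + ε * pd2 h i j q := by
      intro i j
      rw [hv, hh]
      exact pd2_add_mul hB hw (barF p α r) (barF_contDiff p α r) ε hqB i j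
    have hlin1 : ∀ i, pd v i q = pd w i q + ε * pd h i q := by
      intro i
      rw [hv, hh]
      exact pd_add_mul hB hw (barF p α r) (barF_contDiff p α r) ε hqB i
    have e1 : ∑ i, ∑ j, a i j q * pd2 v i j q
        = (∑ i, ∑ j, a i j q * pd2 w i j q) + ε * (∑ i, ∑ j, a i j q * pd2 h i j q) := by
      simp_rw [hlin2]
      rw [Finset.mul_sum, ← Finset.sum_add_distrib]
      refine Finset.sum_congr rfl fun i _ => ?_
      rw [Finset.mul_sum, ← Finset.sum_add_distrib]
      refine Finset.sum_congr rfl fun j _ => ?_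
      ring
    have e3' : ∑ i, b i q * pd v i q
        = (∑ i, b i q * pd w i q) + ε * (∑ i, b i q * pd h i q) := by
      simp_rw [hlin1]
      rw [Finset.mul_sum, ← Finset.sum_add_distrib]
      refine Finset.sum_congr rfl fun i _ => ?_
      ring
    have e4 : v q = w q + ε * h q := rfl
    have hLwq := hLw q hqB
    have hLhq := hLh q hqK
    have hcq : c q ≤ 0 := hcle q hqB
    have final : (0:ℝ) < ∑ i, ∑ j, a i j q * pd2 v i j q
        + ∑ i, b i q * pd v i q + c q * v q := by
      rw [e1, e3', e4]
      nlinarith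
    have hsum0 : ∑ i, b i q * pd v i q = 0 := by simp [hpdv]
    have hcv : c q * v q ≤ 0 := mul_nonpos_iff.mpr (Or.inr ⟨hcq, hvq.le⟩)
    linarith
  -- final contradiction: normal derivative at z
  have hwmax : IsLocalMax w z :=
    Filter.eventually_of_mem (hB.mem_nhds hzB) (fun y hy => by rw [hwz]; exact hwle y hy)
  have hfdw : fderiv ℝ w z = 0 := hwmax.fderiv_eq_zero
  have hwd : HasFDerivAt w (0 : EuclideanSpace ℝ (Fin n) →L[ℝ] ℝ) z := by
    have hd : DifferentiableAt ℝ w z :=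
      ((hw.differentiableOn (by norm_num)) z hzB).differentiableAt (hB.mem_nhds hzB)
    have h' := hd.hasFDerivAt
    rwa [hfdw] at h'
  have hhd := barF_hasFDerivAt p α r z
  have hvd : HasFDerivAt v
      ((0 : EuclideanSpace ℝ (Fin n) →L[ℝ] ℝ) + ε • ((Real.exp (-α * phiF p z) * (-α)) •
        (∑ k, (2*(z k - p k)) • (EuclideanSpace.proj k : EuclideanSpace ℝ (Fin n) →L[ℝ] ℝ)))) z := by
    rw [hv, hh]
    exact hwd.add (hhd.const_mul ε)
  set u : EuclideanSpace ℝ (Fin n) := p - z with hu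
  have hld : HasDerivAt (fun s : ℝ => z + s • u) u 0 := by
    simpa using ((hasDerivAt_id (0:ℝ)).smul_const u).const_add z
  set Dv : EuclideanSpace ℝ (Fin n) →L[ℝ] ℝ :=
    (0 : EuclideanSpace ℝ (Fin n) →L[ℝ] ℝ) + ε • ((Real.exp (-α * phiF p z) * (-α)) •
      (∑ k, (2*(z k - p k)) • (EuclideanSpace.proj k : EuclideanSpace ℝ (Fin n) →L[ℝ] ℝ)))
    with hDv
  set d : ℝ := Dv u with hd_def
  set g : ℝ → ℝ := fun t => v (z + t • u) with hg
  have hφz : phiF p z = r^2 := by rw [phiF_eq_dist, hzd]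
  have hgd : HasDerivAt g d 0 := by
    have hx0 : z + (0:ℝ) • u = z := by simp
    have hvd' : HasFDerivAt v Dv (z + (0:ℝ) • u) := by rw [hx0]; exact hvd
    exact hvd'.comp_hasDerivAt 0 hld
  have hsum : ∑ k, 2*(z k - p k) * u k = -2 * phiF p z := by
    have : ∀ k : Fin n, 2*(z k - p k) * u k = -(2 * (z k - p k)^2) := by
      intro k
      have : u k = p k - z k := rfl
      rw [this]; ring
    simp_rw [this]
    rw [Finset.sum_neg_distrib]
    unfold phiF
    rw [Finset.mul_sum]
    rw [← Finset.sum_neg_distrib]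
    exact Finset.sum_congr rfl fun k _ => by ring
  have hDhu : d = 2*α*ε*r^2*Real.exp (-α * r^2) := by
    rw [hd_def, hDv]
    rw [ContinuousLinearMap.add_apply, ContinuousLinearMap.zero_apply,
      ContinuousLinearMap.smul_apply, ContinuousLinearMap.smul_apply, derivCLM_apply, hsum, hφz]
    simp only [smul_eq_mul]
    ring
  have hdpos : 0 < d := by
    rw [hDhu]
    have := Real.exp_pos (-α * r^2)
    positivity
  have hg0 : g 0 = 0 := by
    have : h z = 0 := by simp [hh, barF, hφz]
    simp [hg, hv, this, hwz]
  have hgle : ∀ t ∈ Set.Ioc (0:ℝ) 2⁻¹, g t ≤ 0 := by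
    intro t ht
    apply hvK
    have h1 : z + t • u - p = (1-t) • (z - p) := by
      rw [hu]
      module
    have hzp : ‖z - p‖ = r := by rw [← dist_eq_norm, hzd]
    have hdist : dist (z + t • u) p = (1-t) * r := by
      rw [dist_eq_norm, h1, norm_smul, hzp, Real.norm_eq_abs,
        abs_of_nonneg (by linarith [ht.2] : (0:ℝ) ≤ 1 - t)]
    constructor
    · rw [Metric.mem_closedBall, hdist]
      nlinarith [ht.1, hr]
    · rw [Metric.mem_ball, not_lt, hdist]
      nlinarith [ht.2, hr]
  have hslope := hasDerivAt_iff_tendsto_slope.mp hgd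
  have hmono : Filter.Tendsto (slope g 0) (nhdsWithin 0 (Set.Ioi 0)) (nhds d) :=
    hslope.mono_left (nhdsWithin_mono 0 (fun t ht => ne_of_gt ht))
  have hev1 : ∀ᶠ t in nhdsWithin 0 (Set.Ioi 0), 0 < slope g 0 t :=
    hmono.eventually (eventually_gt_nhds hdpos)
  have hev2 : ∀ᶠ t in nhdsWithin (0:ℝ) (Set.Ioi 0), t ∈ Set.Ioc (0:ℝ) 2⁻¹ :=
    Ioc_mem_nhdsGT_of_mem ⟨le_refl 0, by norm_num⟩
  obtain ⟨t, h1, h2⟩ := (hev1.and hev2).exists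
  have hsl : slope g 0 t ≤ 0 := by
    rw [slope_def_field]
    apply div_nonpos_of_nonpos_of_nonneg
    · rw [hg0]; linarith [hgle t h2]
    · linarith [h2.1]
  linarith

set_option maxHeartbeats 1000000 in
/-- Interior touching principle: if `L(w) = ∑ aᵢⱼ wᵢⱼ + ∑ bᵢ wᵢ + c w ≥ 0` on a connected
open set `B` with continuous coefficients, `(aᵢⱼ)` symmetric and positive definite,
`w ≤ 0` on `B` and `w(x₀) = 0` at some interior point, then `w ≡ 0` on `B`. -/
theorem interior_touching_principle (n : ℕ) (B : Set (EuclideanSpace ℝ (Fin n)))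
    (hB : IsOpen B) (hBconn : IsConnected B)
    (a : Fin n → Fin n → EuclideanSpace ℝ (Fin n) → ℝ)
    (b : Fin n → EuclideanSpace ℝ (Fin n) → ℝ) (c : EuclideanSpace ℝ (Fin n) → ℝ)
    (hsym : ∀ i j, ∀ x ∈ B, a i j x = a j i x)
    (ha : ∀ i j, ContinuousOn (a i j) B) (hb : ∀ i, ContinuousOn (b i) B)
    (hc : ContinuousOn c B)
    (hell : ∀ x ∈ B, ∀ ξ : EuclideanSpace ℝ (Fin n), ξ ≠ 0 →
      0 < ∑ i, ∑ j, a i j x * ξ i * ξ j)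
    (w : EuclideanSpace ℝ (Fin n) → ℝ) (hw : ContDiffOn ℝ 2 w B)
    (hLw : ∀ x ∈ B,
      0 ≤ ∑ i, ∑ j, a i j x * pd2 w i j x + ∑ i, b i x * pd w i x + c x * w x)
    (hwle : ∀ x ∈ B, w x ≤ 0)
    (x₀ : EuclideanSpace ℝ (Fin n)) (hx₀ : x₀ ∈ B) (hw0 : w x₀ = 0) :
    ∀ x ∈ B, w x = 0 := by
  -- reduce to the case of a nonpositive zeroth order coefficient
  set c' : EuclideanSpace ℝ (Fin n) → ℝ := fun x => min (c x) 0 with hc'def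
  have hc' : ContinuousOn c' B := fun y hy => (hc y hy).min continuousWithinAt_const
  have hc'le : ∀ x ∈ B, c' x ≤ 0 := fun x _ => min_le_right _ _
  have hLw' : ∀ x ∈ B, 0 ≤ ∑ i, ∑ j, a i j x * pd2 w i j x
      + ∑ i, b i x * pd w i x + c' x * w x := by
    intro x hx
    have h1 := hLw x hx
    have h2 : 0 ≤ c x - c' x := by
      have : c' x ≤ c x := min_le_left _ _
      linarith
    have h3 : (c x - c' x) * w x ≤ 0 :=
      mul_nonpos_iff.mpr (Or.inl ⟨h2, hwle x hx⟩)
    nlinarith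
  intro x hx
  by_contra hxne
  have hxneg : w x < 0 := lt_of_le_of_ne (hwle x hx) hxne
  set N : Set (EuclideanSpace ℝ (Fin n)) := B ∩ w ⁻¹' (Set.Iio 0) with hN
  have hNopen : IsOpen N := (hw.continuousOn).isOpen_inter_preimage hB isOpen_Iio
  have hxN : x ∈ N := ⟨hx, hxneg⟩
  have hzex : ∃ z, z ∈ B ∧ w z = 0 ∧ z ∈ closure N := by
    by_contra hno
    push_neg at hno
    set V : Set (EuclideanSpace ℝ (Fin n)) := B \ closure N with hV
    have hVopen : IsOpen V := hB.sdiff isClosed_closure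
    have hcover : B ⊆ N ∪ V := by
      intro y hy
      by_cases hwy : w y < 0
      · exact Or.inl ⟨hy, hwy⟩
      · have hy0 : w y = 0 := le_antisymm (hwle y hy) (not_lt.mp hwy)
        exact Or.inr ⟨hy, hno y hy hy0⟩
    have := hBconn.isPreconnected N V hNopen hVopen hcover
      ⟨x, hx, hxN⟩ ⟨x₀, hx₀, ⟨hx₀, hno x₀ hx₀ hw0⟩⟩
    obtain ⟨y, _, hyN, hyV⟩ := this
    exact hyV.2 (subset_closure hyN)
  obtain ⟨z, hzB, hwz, hzcl⟩ := hzex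
  obtain ⟨dR, hdpos, hdball⟩ := Metric.isOpen_iff.mp hB z hzB
  obtain ⟨p, hpN, hpd⟩ := Metric.mem_closure_iff.mp hzcl (dR/4) (by positivity)
  have hpB : p ∈ B := hpN.1
  have hpneg : w p < 0 := hpN.2
  have hcbB : Metric.closedBall p (dR/2) ⊆ B := by
    intro y hy
    apply hdball
    rw [Metric.mem_ball]
    have h1 : dist y p ≤ dR/2 := Metric.mem_closedBall.mp hy
    have h2 : dist p z < dR/4 := by rw [dist_comm]; exact hpd
    calc dist y z ≤ dist y p + dist p z := dist_triangle y p z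
      _ < dR/2 + dR/4 := by linarith
      _ < dR := by linarith
  set Z' : Set (EuclideanSpace ℝ (Fin n)) := Metric.closedBall p (dR/2) ∩ w ⁻¹' {0} with hZ'
  have hZ'closed : IsClosed Z' :=
    ContinuousOn.preimage_isClosed_of_isClosed ((hw.continuousOn).mono hcbB)
      Metric.isClosed_closedBall isClosed_singleton
  have hZ'cpt : IsCompact Z' :=
    (isCompact_closedBall p (dR/2)).of_isClosed_subset hZ'closed Set.inter_subset_left
  have hzZ' : z ∈ Z' := by
    constructor
    · rw [Metric.mem_closedBall]
      have : dist z p < dR/4 := hpd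
      linarith
    · exact hwz
  obtain ⟨z₁, hz₁Z', hz₁min⟩ := hZ'cpt.exists_isMinOn ⟨z, hzZ'⟩
    ((continuous_const.dist continuous_id).continuousOn)
  set r : ℝ := dist p z₁ with hrdef
  have hz₁cb : z₁ ∈ Metric.closedBall p (dR/2) := hz₁Z'.1
  have hz₁B : z₁ ∈ B := hcbB hz₁cb
  have hwz₁ : w z₁ = 0 := hz₁Z'.2
  have hrpos : 0 < r := by
    rcases eq_or_lt_of_le (dist_nonneg : (0:ℝ) ≤ dist p z₁) with heq | hlt
    · exfalso
      have : p = z₁ := dist_eq_zero.mp heq.symm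
      rw [this] at hpneg
      rw [hwz₁] at hpneg
      exact lt_irrefl 0 hpneg
    · exact hlt
  have hrle : r < dR/4 := by
    have h1 : dist p z₁ ≤ dist p z := hz₁min hzZ'
    have h2 : dist p z < dR/4 := by rw [dist_comm]; exact hpd
    calc r = dist p z₁ := rfl
      _ ≤ dist p z := h1
      _ < dR/4 := h2
  have hcb2 : Metric.closedBall p r ⊆ B := by
    intro y hy
    apply hcbB
    rw [Metric.mem_closedBall] at hy ⊢
    linarith
  have hnegball : ∀ y ∈ Metric.ball p r, w y < 0 := by
    intro y hy
    have hyb : dist y p < r := Metric.mem_ball.mp hy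
    have hyB : y ∈ B := hcb2 (Metric.ball_subset_closedBall hy)
    rcases lt_or_eq_of_le (hwle y hyB) with hlt | heq
    · exact hlt
    · exfalso
      have hyZ' : y ∈ Z' := by
        constructor
        · rw [Metric.mem_closedBall]
          linarith
        · simp only [Set.mem_preimage, Set.mem_singleton_iff]
          exact heq
      have : dist p z₁ ≤ dist p y := hz₁min hyZ'
      rw [dist_comm p y] at this
      linarith
  exact key B hB a b c' hsym ha hb hc' hc'le hell w hw hLw' hwle p z₁ r hrpos hcb2
    hnegball (by rw [dist_comm, hrdef]) hwz₁
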